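/- Let A be a real symmetric positive-definite m×m matrix and Λ∞ ∈ ℝ. Then the inequality ⟨Aξ,ξ⟩ − Λ∞²·⟨Aω,ω⟩·(⟨ξ,ω⟩)² ≥ 0 holds for all ξ, ω ∈ ℝᵐ with |ω| = 1 if and only if Λ∞²·(μ₁ + μ_m)² ≤ 4·μ₁·μ_m, where μ₁ and μ_m are the smallest and largest eigenvalues of A. -/

import Mathlib

/-- Euclidean inner product on ℝᵐ. -/
noncomputable def dotR {m : ℕ} (x y : Fin m → ℝ) : ℝ := ∑ i, x i * y i

open Finset in
lemma sum_pair_support {m : ℕ} {i j : Fin m} (hij : i ≠ j) (f : Fin m → ℝ)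
    (hf : ∀ k, k ≠ i → k ≠ j → f k = 0) : ∑ k, f k = f i + f j := by
  classical
  have : ∀ k, f k = (if k = i then f i else 0) + (if k = j then f j else 0) := by
    intro k
    by_cases h1 : k = i
    · subst h1; simp [hij]
    · by_cases h2 : k = j
      · subst h2; simp [h1]
      · simp [h1, h2, hf k h1 h2]
  calc ∑ k, f k = ∑ k, ((if k = i then f i else 0) + (if k = j then f j else 0)) := by
        exact Finset.sum_congr rfl fun k _ => this k
    _ = f i + f j := by
        rw [Finset.sum_add_distrib, Finset.sum_ite_eq' univ i fun _ => f i,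
          Finset.sum_ite_eq' univ j fun _ => f j]
        simp

/-- Two-point sums with explicit values. -/
lemma sum_pair_support' {m : ℕ} {i j : Fin m} (hij : i ≠ j) (f : Fin m → ℝ) (a b : ℝ)
    (hfi : f i = a) (hfj : f j = b)
    (hf : ∀ k, k ≠ i → k ≠ j → f k = 0) : ∑ k, f k = a + b := by
  rw [sum_pair_support hij f hf, hfi, hfj]

/-- The key inequality, stated purely in terms of sums. -/
lemma key_sums (m : ℕ) (μ : Fin m → ℝ) (hpos : ∀ i, 0 < μ i) (Λ μ1 μm : ℝ)
    (h1 : ∀ i, μ1 ≤ μ i) (hm : ∀ i, μ i ≤ μm)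
    (e1 : ∃ i, μ i = μ1) (em : ∃ i, μ i = μm) :
    (∀ x y : Fin m → ℝ, (∑ i, y i * y i) = 1 →
        (∑ i, μ i * (x i * x i)) - Λ ^ 2 * (∑ i, μ i * (y i * y i)) * (∑ i, x i * y i) ^ 2 ≥ 0)
      ↔ Λ ^ 2 * (μ1 + μm) ^ 2 ≤ 4 * μ1 * μm := by
  classical
  obtain ⟨i1, hi1⟩ := e1
  obtain ⟨im, him⟩ := em
  have hμ1 : 0 < μ1 := hi1 ▸ hpos i1
  have hμm : 0 < μm := him ▸ hpos im
  constructor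
  · intro H
    by_cases heq : μ1 = μm
    · -- use a single basis vector
      set y : Fin m → ℝ := fun k => if k = i1 then 1 else 0 with hy
      have hsum1 : (∑ i, y i * y i) = 1 := by
        rw [Finset.sum_eq_single_of_mem i1 (Finset.mem_univ _)]
        · simp [hy]
        · intro k _ hk; simp [hy, hk]
      have hsum2 : (∑ i, μ i * (y i * y i)) = μ1 := by
        rw [Finset.sum_eq_single_of_mem i1 (Finset.mem_univ _)]
        · simp [hy, hi1]
        · intro k _ hk; simp [hy, hk]
      have hthis := H y y hsum1
      rw [hsum2, hsum1] at hthis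
      -- hthis : μ1 - Λ^2 * μ1 * 1^2 ≥ 0
      have hΛ1 : Λ ^ 2 ≤ 1 := by nlinarith [hthis, hμ1]
      have hsq : (μ1 + μm) ^ 2 = 4 * μ1 * μm := by rw [heq]; ring
      have := mul_le_mul_of_nonneg_right hΛ1 (sq_nonneg (μ1 + μm))
      linarith
    · have hij : i1 ≠ im := by
        intro h; apply heq; rw [← hi1, ← him, h]
      set a : ℝ := Real.sqrt (1 / 2) with ha
      have ha2 : a * a = 1 / 2 := Real.mul_self_sqrt (by norm_num)
      set x : Fin m → ℝ := fun k => if k = i1 then 1 / μ1 else if k = im then 1 / μm else 0 with hx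
      set y : Fin m → ℝ := fun k => if k = i1 then a else if k = im then a else 0 with hyy
      have hx0 : ∀ k, k ≠ i1 → k ≠ im → x k = 0 := by intro k ha' hb'; simp [hx, ha', hb']
      have hy0 : ∀ k, k ≠ i1 → k ≠ im → y k = 0 := by intro k ha' hb'; simp [hyy, ha', hb']
      have hxi1 : x i1 = 1 / μ1 := by simp [hx]
      have hxim : x im = 1 / μm := by simp [hx, hij.symm]
      have hyi1 : y i1 = a := by simp [hyy]
      have hyim : y im = a := by simp [hyy, hij.symm]
      have hsum1 : (∑ i, y i * y i) = 1 := by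
        rw [sum_pair_support' hij (fun k => y k * y k) (1/2) (1/2)
          (by simp only [hyi1]; exact ha2) (by simp only [hyim]; exact ha2)
          (fun k ha' hb' => by simp [hy0 k ha' hb'])]
        norm_num
      have hsum2 : (∑ i, μ i * (y i * y i)) = (μ1 + μm) / 2 := by
        rw [sum_pair_support' hij (fun k => μ k * (y k * y k)) (μ1 * (1/2)) (μm * (1/2))
          (by simp only [hyi1, ha2, hi1]) (by simp only [hyim, ha2, him])
          (fun k ha' hb' => by simp [hy0 k ha' hb'])]
        ring
      have hsum3 : (∑ i, x i * y i) = a * (1 / μ1 + 1 / μm) := by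
        rw [sum_pair_support' hij (fun k => x k * y k) ((1/μ1) * a) ((1/μm) * a)
          (by simp only [hxi1, hyi1]) (by simp only [hxim, hyim])
          (fun k ha' hb' => by simp [hy0 k ha' hb'])]
        ring
      have hsum4 : (∑ i, μ i * (x i * x i)) = 1 / μ1 + 1 / μm := by
        rw [sum_pair_support' hij (fun k => μ k * (x k * x k))
          (μ1 * ((1/μ1) * (1/μ1))) (μm * ((1/μm) * (1/μm)))
          (by simp only [hxi1, hi1]) (by simp only [hxim, him])
          (fun k ha' hb' => by simp [hx0 k ha' hb'])]
        field_simp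
      have hH := H x y hsum1
      rw [hsum2, hsum3, hsum4] at hH
      have hexp : (a * (1 / μ1 + 1 / μm)) ^ 2 = (1 / 2) * (1 / μ1 + 1 / μm) ^ 2 := by
        rw [mul_pow, sq, ha2]
      rw [hexp] at hH
      have hH' : 0 ≤ (1 / μ1 + 1 / μm) -
          Λ ^ 2 * ((μ1 + μm) / 2) * ((1 / 2) * (1 / μ1 + 1 / μm) ^ 2) := hH
      have hs : (1 / μ1 + 1 / μm) = (μ1 + μm) / (μ1 * μm) := by field_simp; ring
      rw [hs] at hH'
      have hμμ : 0 < μ1 * μm := mul_pos hμ1 hμm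
      have hμsum : 0 < μ1 + μm := by linarith
      have hmul := mul_le_mul_of_nonneg_left (sub_nonneg.mp hH')
        (le_of_lt (by positivity : (0:ℝ) < 4 * (μ1 * μm) ^ 2 / (μ1 + μm)))
      have lhs_eq : (4 * (μ1 * μm) ^ 2 / (μ1 + μm)) *
          (Λ ^ 2 * ((μ1 + μm) / 2) * ((1 / 2) * ((μ1 + μm) / (μ1 * μm)) ^ 2)) =
          Λ ^ 2 * (μ1 + μm) ^ 2 := by field_simp; ring
      have rhs_eq : (4 * (μ1 * μm) ^ 2 / (μ1 + μm)) * ((μ1 + μm) / (μ1 * μm)) =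
          4 * μ1 * μm := by field_simp
      rw [lhs_eq, rhs_eq] at hmul
      linarith
  · intro hK x y hy1
    set S : ℝ := ∑ i, x i * y i with hS
    set C : ℝ := ∑ i, μ i * (x i * x i) with hC
    set P : ℝ := ∑ i, μ i * (y i * y i) with hP
    set Q : ℝ := ∑ i, (y i * y i) / μ i with hQ
    have hCnn : 0 ≤ C := Finset.sum_nonneg fun i _ =>
      mul_nonneg (hpos i).le (mul_self_nonneg _)
    have hPnn : 0 ≤ P := Finset.sum_nonneg fun i _ =>
      mul_nonneg (hpos i).le (mul_self_nonneg _)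
    have hQnn : 0 ≤ Q := Finset.sum_nonneg fun i _ =>
      div_nonneg (mul_self_nonneg _) (hpos i).le
    -- Cauchy–Schwarz: S^2 ≤ C * Q
    have hCS : S ^ 2 ≤ C * Q := by
      refine Finset.sum_sq_le_sum_mul_sum_of_sq_eq_mul Finset.univ
        (f := fun i => μ i * (x i * x i)) (g := fun i => (y i * y i) / μ i)
        (r := fun i => x i * y i)
        (fun i _ => mul_nonneg (hpos i).le (mul_self_nonneg _))
        (fun i _ => div_nonneg (mul_self_nonneg _) (hpos i).le)
        (fun i _ => ?_)
      have := (hpos i).ne'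
      field_simp
    -- Kantorovich pointwise
    have hPt : ∀ i, μ i * (y i * y i) + μ1 * μm * ((y i * y i) / μ i)
        ≤ (μ1 + μm) * (y i * y i) := by
      intro i
      have hμi := hpos i
      have hquad : 0 ≤ (μ i - μ1) * (μm - μ i) * (y i * y i) :=
        mul_nonneg (mul_nonneg (sub_nonneg.mpr (h1 i)) (sub_nonneg.mpr (hm i)))
          (mul_self_nonneg _)
      have hdiv : μ i * (μ1 * μm * ((y i * y i) / μ i)) = μ1 * μm * (y i * y i) := by
        field_simp
      have key2 : μ i * (μ i * (y i * y i) + μ1 * μm * ((y i * y i) / μ i))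
          ≤ μ i * ((μ1 + μm) * (y i * y i)) := by
        rw [mul_add, hdiv]
        nlinarith [hquad]
      exact le_of_mul_le_mul_left key2 hμi
    have hPQsum : P + μ1 * μm * Q ≤ μ1 + μm := by
      have hsum := Finset.sum_le_sum (fun i (_ : i ∈ Finset.univ) => hPt i)
      have lhs : (∑ i, (μ i * (y i * y i) + μ1 * μm * ((y i * y i) / μ i)))
          = P + μ1 * μm * Q := by
        rw [Finset.sum_add_distrib, ← Finset.mul_sum]
      have rhs : (∑ i, (μ1 + μm) * (y i * y i)) = μ1 + μm := by
        rw [← Finset.mul_sum, hy1, mul_one]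
      rw [lhs, rhs] at hsum
      exact hsum
    have hμμ : 0 < μ1 * μm := mul_pos hμ1 hμm
    have hAMGM : 4 * (μ1 * μm) * (P * Q) ≤ (μ1 + μm) ^ 2 := by
      nlinarith [sq_nonneg (P - μ1 * μm * Q), hPQsum, hPnn,
        mul_nonneg (mul_nonneg hμ1.le hμm.le) hQnn]
    have hΛP : 0 ≤ Λ ^ 2 * P := mul_nonneg (sq_nonneg _) hPnn
    have s1 : Λ ^ 2 * P * S ^ 2 ≤ Λ ^ 2 * P * (C * Q) :=
      mul_le_mul_of_nonneg_left hCS hΛP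
    have s2 : (4 * (μ1 * μm)) * (Λ ^ 2 * P * (C * Q)) ≤ (4 * (μ1 * μm)) * C := by
      have t1 : (Λ ^ 2 * C) * (4 * (μ1 * μm) * (P * Q)) ≤ (Λ ^ 2 * C) * (μ1 + μm) ^ 2 :=
        mul_le_mul_of_nonneg_left hAMGM (mul_nonneg (sq_nonneg _) hCnn)
      have t2 : C * (Λ ^ 2 * (μ1 + μm) ^ 2) ≤ C * (4 * μ1 * μm) :=
        mul_le_mul_of_nonneg_left hK hCnn
      nlinarith [t1, t2]
    have s3 : Λ ^ 2 * P * (C * Q) ≤ C :=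
      le_of_mul_le_mul_left s2 (by positivity : (0:ℝ) < 4 * (μ1 * μm))
    have hfin : Λ ^ 2 * P * S ^ 2 ≤ C := le_trans s1 s3
    linarith

theorem stmt_4 (m : ℕ) (A : Matrix (Fin m) (Fin m) ℝ) (hA : A.IsHermitian)
    (hpd : ∀ ξ : Fin m → ℝ, ξ ≠ 0 → 0 < dotR (A.mulVec ξ) ξ)
    (Λinf μ1 μm : ℝ)
    (h1 : ∀ i, μ1 ≤ hA.eigenvalues i) (hmax : ∀ i, hA.eigenvalues i ≤ μm)
    (e1 : ∃ i, hA.eigenvalues i = μ1) (em : ∃ i, hA.eigenvalues i = μm) :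
    (∀ ξ ω : Fin m → ℝ, dotR ω ω = 1 →
        dotR (A.mulVec ξ) ξ - Λinf ^ 2 * dotR (A.mulVec ω) ω * (dotR ξ ω) ^ 2 ≥ 0)
      ↔ Λinf ^ 2 * (μ1 + μm) ^ 2 ≤ 4 * μ1 * μm := by
  classical
  set B := hA.eigenvectorBasis with hB
  set μ := hA.eigenvalues with hμ
  -- dotR is the Euclidean inner product
  have hdot : ∀ x y : Fin m → ℝ, dotR x y =
      (inner ℝ ((WithLp.equiv 2 (Fin m → ℝ)).symm x) ((WithLp.equiv 2 (Fin m → ℝ)).symm y) : ℝ) := by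
    intro x y; simp [dotR, PiLp.inner_apply, RCLike.inner_apply, mul_comm]
  have hdot_comm : ∀ x y : Fin m → ℝ, dotR x y = dotR y x := by
    intro x y; simp only [dotR]; exact Finset.sum_congr rfl fun i _ => mul_comm _ _
  -- symmetry of A in dotR
  have hsymm : ∀ u v : Fin m → ℝ, dotR (A.mulVec u) v = dotR (A.mulVec v) u := by
    intro u v
    simp only [dotR, Matrix.mulVec, dotProduct, Finset.sum_mul]
    rw [Finset.sum_comm]
    refine Finset.sum_congr rfl fun i _ => Finset.sum_congr rfl fun j _ => ?_
    have hAij : A j i = A i j := by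
      have := congrFun (congrFun hA j) i
      simpa [Matrix.conjTranspose_apply] using this.symm
    rw [hAij]; ring
  -- coordinates in the eigenbasis
  set c : (Fin m → ℝ) → Fin m → ℝ := fun ξ i => dotR (fun j => B i j) ξ with hcdef
  have hc : ∀ (ξ : Fin m → ℝ) (i : Fin m),
      c ξ i = (inner ℝ (B i) ((WithLp.equiv 2 (Fin m → ℝ)).symm ξ) : ℝ) := by
    intro ξ i; exact hdot _ _
  have hAB : ∀ i, A.mulVec (fun j => B i j) = μ i • (fun j => B i j) := by
    intro i; exact hA.mulVec_eigenvectorBasis i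
  -- F2 : coordinates of A.mulVec ξ
  have hF2 : ∀ (ξ : Fin m → ℝ) (i : Fin m), c (A.mulVec ξ) i = μ i * c ξ i := by
    intro ξ i
    have : c (A.mulVec ξ) i = dotR (A.mulVec ξ) (fun j => B i j) := hdot_comm _ _
    rw [this, hsymm, hAB i]
    simp only [hcdef, dotR, Pi.smul_apply, smul_eq_mul, Finset.mul_sum]
    exact Finset.sum_congr rfl fun j _ => by ring
  -- F1 : Parseval
  have hF1 : ∀ ξ ω : Fin m → ℝ, dotR ξ ω = ∑ i, c ξ i * c ω i := by
    intro ξ ω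
    rw [hdot ξ ω, ← B.sum_inner_mul_inner]
    refine Finset.sum_congr rfl fun i _ => ?_
    rw [hc, hc, real_inner_comm ((WithLp.equiv 2 (Fin m → ℝ)).symm ξ) (B i)]
  have hG1 : ∀ ξ : Fin m → ℝ, dotR (A.mulVec ξ) ξ = ∑ i, μ i * (c ξ i * c ξ i) := by
    intro ξ
    rw [hF1 (A.mulVec ξ) ξ]
    exact Finset.sum_congr rfl fun i _ => by rw [hF2]; ring
  -- surjectivity of coordinates
  have hF3 : ∀ x : Fin m → ℝ, ∃ ξ : Fin m → ℝ, ∀ i, c ξ i = x i := by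
    intro x
    refine ⟨fun j => B.repr.symm ((WithLp.equiv 2 (Fin m → ℝ)).symm x) j, fun i => ?_⟩
    have h0 : (WithLp.equiv 2 (Fin m → ℝ)).symm
        (fun j => B.repr.symm ((WithLp.equiv 2 (Fin m → ℝ)).symm x) j)
        = B.repr.symm ((WithLp.equiv 2 (Fin m → ℝ)).symm x) := rfl
    rw [hc, h0, ← B.repr_apply_apply]
    simp
  -- positivity of eigenvalues
  have hμpos : ∀ i, 0 < μ i := by
    intro i
    have hBnorm : ‖B i‖ = 1 := B.orthonormal.1 i
    have hBne : (fun j => B i j) ≠ (0 : Fin m → ℝ) := by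
      intro h
      have hB0 : B i = 0 := by ext j; simpa using congrFun h j
      rw [hB0, norm_zero] at hBnorm
      norm_num at hBnorm
    have hpdi := hpd (fun j => B i j) hBne
    have hcc : dotR (A.mulVec (fun j => B i j)) (fun j => B i j)
        = μ i * dotR (fun j => B i j) (fun j => B i j) := by
      rw [hAB i]
      simp only [dotR, Pi.smul_apply, smul_eq_mul, Finset.mul_sum]
      exact Finset.sum_congr rfl fun j _ => by ring
    have hnorm1 : dotR (fun j => B i j) (fun j => B i j) = 1 := by
      rw [hdot]
      have h2 : (inner ℝ (B i) (B i) : ℝ) = ‖B i‖ ^ 2 := real_inner_self_eq_norm_sq (B i)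
      have h3 : (inner ℝ ((WithLp.equiv 2 (Fin m → ℝ)).symm (fun j => B i j))
          ((WithLp.equiv 2 (Fin m → ℝ)).symm (fun j => B i j)) : ℝ)
          = (inner ℝ (B i) (B i) : ℝ) := rfl
      rw [h3, h2, hBnorm]; norm_num
    rw [hcc, hnorm1, mul_one] at hpdi
    exact hpdi
  rw [← key_sums m μ hμpos Λinf μ1 μm h1 hmax e1 em]
  constructor
  · intro H x y hy
    obtain ⟨ξ, hξ⟩ := hF3 x
    obtain ⟨ω, hω⟩ := hF3 y
    have hω1 : dotR ω ω = 1 := by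
      rw [hF1]
      rw [show (∑ i, c ω i * c ω i) = ∑ i, y i * y i from
        Finset.sum_congr rfl fun i _ => by rw [hω]]
      exact hy
    have := H ξ ω hω1
    rw [hG1 ξ, hG1 ω, hF1 ξ ω] at this
    rw [show (∑ i, μ i * (c ξ i * c ξ i)) = ∑ i, μ i * (x i * x i) from
      Finset.sum_congr rfl fun i _ => by rw [hξ]] at this
    rw [show (∑ i, μ i * (c ω i * c ω i)) = ∑ i, μ i * (y i * y i) from
      Finset.sum_congr rfl fun i _ => by rw [hω]] at this
    rw [show (∑ i, c ξ i * c ω i) = ∑ i, x i * y i from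
      Finset.sum_congr rfl fun i _ => by rw [hξ, hω]] at this
    exact this
  · intro H ξ ω hω1
    have hy : (∑ i, c ω i * c ω i) = 1 := by rw [← hF1]; exact hω1
    have := H (c ξ) (c ω) hy
    rw [hG1 ξ, hG1 ω, hF1 ξ ω]
    exact this
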